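/- There exists a constant C > 0 such that for all signs μ, ν ∈ {+1, −1} and all ξ, η ∈ ℝ² with ξ ≠ 0, η ≠ 0, and ξ ≠ η: |∇_η Φ^{μ,ν}(ξ, η)| + |∇_ξ Φ^{μ,ν}(ξ, η)| ≤ C max{|ξ|, |η|} (|ξ| + |η| + 1)^{−1/2}. -/

import Mathlib

set_option maxHeartbeats 1000000
set_option synthInstance.maxHeartbeats 1000000


noncomputable section

abbrev E2 : Type := EuclideanSpace ℝ (Fin 2)

/-- Euclidean dot product on ℝ². -/
def dotE (x y : E2) : ℝ := ∑ i : Fin 2, x i * y i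

/-- `Λ(r) = r^{3/2} (tanh r)^{1/2}`. -/
def Lam (r : ℝ) : ℝ := r ^ ((3 : ℝ) / 2) * Real.sqrt (Real.tanh r)

/-- `λ(x) = Λ(√x)`. -/
def lam (x : ℝ) : ℝ := Lam (Real.sqrt x)

/-- The phase `Φ^{μ,ν}(ξ,η) = Λ(|ξ|) − μ Λ(|ξ−η|) − ν Λ(|η|)`. -/
def Phi (μ ν : ℝ) (ξ η : E2) : ℝ := Lam ‖ξ‖ - μ * Lam ‖ξ - η‖ - ν * Lam ‖η‖

/-! ### Auxiliary analytic lemmas -/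

lemma my_tanh_pos {r : ℝ} (hr : 0 < r) : 0 < Real.tanh r := by
  rw [Real.tanh_eq_sinh_div_cosh]
  exact div_pos (Real.sinh_pos_iff.2 hr) (Real.cosh_pos r)

lemma my_tanh_le_one (r : ℝ) : Real.tanh r ≤ 1 := by
  rw [Real.tanh_eq_sinh_div_cosh, div_le_one (Real.cosh_pos r)]
  nlinarith [Real.cosh_sub_sinh r, Real.exp_pos (-r)]

lemma my_hasDerivAt_tanh (r : ℝ) : HasDerivAt Real.tanh (1 / Real.cosh r ^ 2) r := by
  have h := (Real.hasDerivAt_sinh r).div (Real.hasDerivAt_cosh r) (ne_of_gt (Real.cosh_pos r))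
  have heq : (Real.cosh r * Real.cosh r - Real.sinh r * Real.sinh r) / Real.cosh r ^ 2
      = 1 / Real.cosh r ^ 2 := by
    rw [show Real.cosh r * Real.cosh r - Real.sinh r * Real.sinh r
        = Real.cosh r ^ 2 - Real.sinh r ^ 2 by ring, Real.cosh_sq_sub_sinh_sq]
  rw [heq] at h
  exact HasDerivAt.congr_of_eventuallyEq h
    (by filter_upwards with x; rw [Real.tanh_eq_sinh_div_cosh]; rfl)

/-- Derivative of `Lam`. -/
def dL (r : ℝ) : ℝ :=
  3 / 2 * r ^ ((1 : ℝ) / 2) * Real.sqrt (Real.tanh r) +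
    r ^ ((3 : ℝ) / 2) * (1 / Real.cosh r ^ 2 / (2 * Real.sqrt (Real.tanh r)))

lemma my_hasDerivAt_Lam {r : ℝ} (hr : 0 < r) : HasDerivAt Lam (dL r) r := by
  have h1 : HasDerivAt (fun x : ℝ => x ^ ((3 : ℝ) / 2)) (3 / 2 * r ^ ((1 : ℝ) / 2)) r := by
    have := Real.hasDerivAt_rpow_const (x := r) (p := (3 : ℝ) / 2) (Or.inl (ne_of_gt hr))
    convert this using 1
    norm_num
  have h2 : HasDerivAt (fun x : ℝ => Real.sqrt (Real.tanh x))
      (1 / Real.cosh r ^ 2 / (2 * Real.sqrt (Real.tanh r))) r := by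
    have hs := Real.hasDerivAt_sqrt (ne_of_gt (my_tanh_pos hr))
    have := hs.comp r (my_hasDerivAt_tanh r)
    refine this.congr_deriv ?_
    ring
  have := h1.mul h2
  exact this

lemma dL_nonneg {r : ℝ} (hr : 0 < r) : 0 ≤ dL r := by
  have h1 : 0 ≤ Real.tanh r := (my_tanh_pos hr).le
  unfold dL
  positivity

lemma my_tanh_le_self {r : ℝ} (hr : 0 ≤ r) : Real.tanh r ≤ r := by
  have hg : ∀ x : ℝ, HasDerivAt (fun x => x * Real.cosh x - Real.sinh x) (x * Real.sinh x) x := by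
    intro x
    have := ((hasDerivAt_id x).mul (Real.hasDerivAt_cosh x)).sub (Real.hasDerivAt_sinh x)
    refine this.congr_deriv ?_
    simp [id]
  have hmono : Monotone (fun x : ℝ => x * Real.cosh x - Real.sinh x) := by
    apply monotone_of_deriv_nonneg
    · exact fun x => (hg x).differentiableAt
    · intro x
      rw [(hg x).deriv]
      rcases le_or_gt 0 x with hx | hx
      · have : (0:ℝ) ≤ Real.sinh x := by simpa using Real.sinh_le_sinh.2 hx
        exact mul_nonneg hx this
      · have : Real.sinh x ≤ 0 := by simpa using Real.sinh_le_sinh.2 hx.le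
        nlinarith
  have h0 := hmono hr
  simp only [zero_mul, Real.cosh_zero, Real.sinh_zero, sub_zero] at h0
  rw [Real.tanh_eq_sinh_div_cosh, div_le_iff₀ (Real.cosh_pos r)]
  linarith

lemma my_cosh_le_two {r : ℝ} (h0 : 0 ≤ r) (h1 : r ≤ 1) : Real.cosh r ≤ 2 := by
  have hle : Real.cosh r ≤ Real.cosh 1 := by
    rw [Real.cosh_le_cosh, abs_of_nonneg h0, abs_of_nonneg zero_le_one]
    exact h1
  have hc1 : Real.cosh 1 ≤ 2 := by
    rw [Real.cosh_eq]
    have he : Real.exp 1 < 2.7182818286 := Real.exp_one_lt_d9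
    have he2 : Real.exp (-1) ≤ 1 := by
      rw [Real.exp_le_one_iff]; norm_num
    linarith
  linarith

lemma my_tanh_ge_half {r : ℝ} (h0 : 0 ≤ r) (h1 : r ≤ 1) : r / 2 ≤ Real.tanh r := by
  rw [Real.tanh_eq_sinh_div_cosh, div_le_div_iff₀ (by norm_num) (Real.cosh_pos r)]
  have hs : r ≤ Real.sinh r := by
    rcases eq_or_lt_of_le h0 with h | h
    · simp [← h]
    · exact (Real.self_lt_sinh_iff.2 h).le
  have hc := my_cosh_le_two h0 h1
  nlinarith [Real.cosh_pos r]

lemma my_tanh_ge_half' {r : ℝ} (h1 : 1 ≤ r) : 1 / 2 ≤ Real.tanh r := by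
  rw [Real.tanh_eq_sinh_div_cosh, div_le_div_iff₀ (by norm_num) (Real.cosh_pos r)]
  rw [Real.sinh_eq, Real.cosh_eq]
  have he : (2 : ℝ) < Real.exp 1 := by
    have := Real.exp_one_gt_d9
    linarith
  have he2 : Real.exp 1 ≤ Real.exp r := Real.exp_le_exp.2 h1
  have hei : Real.exp (-r) ≤ 1 / 2 := by
    rw [Real.exp_neg, inv_le_comm₀ (Real.exp_pos r) (by norm_num)]
    norm_num
    linarith
  linarith

/-- The key pointwise bound on the derivative of `Lam`. -/
lemma dL_le {r : ℝ} (hr : 0 < r) : dL r ≤ 6 * r / Real.sqrt (r + 1) := by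
  set t := Real.tanh r with ht
  set st := Real.sqrt t with hst
  set sr := Real.sqrt r with hsr
  set sq := Real.sqrt (r + 1) with hsq
  have htp : 0 < t := my_tanh_pos hr
  have hstp : 0 < st := Real.sqrt_pos.2 htp
  have hsrp : 0 < sr := Real.sqrt_pos.2 hr
  have hsqp : 0 < sq := Real.sqrt_pos.2 (by linarith)
  have hst2 : st ^ 2 = t := Real.sq_sqrt htp.le
  have hsr2 : sr ^ 2 = r := Real.sq_sqrt hr.le
  have hsq2 : sq ^ 2 = r + 1 := Real.sq_sqrt (by linarith)
  have hc1 : 1 ≤ Real.cosh r := Real.one_le_cosh r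
  have h12 : r ^ ((1 : ℝ) / 2) = sr := (Real.sqrt_eq_rpow r).symm
  have h32 : r ^ ((3 : ℝ) / 2) = r * sr := by
    rw [show (3 : ℝ) / 2 = 1 + 1 / 2 by norm_num, Real.rpow_add hr, Real.rpow_one,
      ← Real.sqrt_eq_rpow]
  have hdL : dL r = 3 / 2 * sr * st + r * sr * (1 / Real.cosh r ^ 2 / (2 * st)) := by
    unfold dL
    rw [h12, h32]
  rcases le_or_gt r 1 with hr1 | hr1
  · -- small r : dL r ≤ 5/2 * r
    have htr : t ≤ r := my_tanh_le_self hr.le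
    have hth : r / 2 ≤ t := my_tanh_ge_half hr.le hr1
    have hstsr : st ≤ sr := Real.sqrt_le_sqrt htr
    have hT1 : 3 / 2 * sr * st ≤ 3 / 2 * r := by nlinarith
    have hT2 : r * sr * (1 / Real.cosh r ^ 2 / (2 * st)) ≤ r := by
      have h2st : sr ≤ 2 * st := by nlinarith
      rw [div_div, mul_one_div, div_le_iff₀ (by positivity)]
      have hA : r * sr ≤ r * (2 * st) := by nlinarith
      have hB : 0 ≤ r * (2 * st) * (Real.cosh r ^ 2 - 1) :=
        mul_nonneg (by positivity) (by nlinarith)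
      nlinarith
    have hle : dL r ≤ 5 / 2 * r := by rw [hdL]; linarith
    have hsqle : sq ≤ 3 / 2 := by
      have h94 : Real.sqrt (9 / 4 : ℝ) = 3 / 2 := by
        rw [show (9 / 4 : ℝ) = (3 / 2) ^ 2 by norm_num, Real.sqrt_sq (by norm_num)]
      rw [hsq, ← h94]
      exact Real.sqrt_le_sqrt (by linarith)
    rw [le_div_iff₀ hsqp]
    have hmm : dL r * sq ≤ 5 / 2 * r * (3 / 2) :=
      mul_le_mul hle hsqle hsqp.le (by positivity)
    linarith
  · -- large r : dL r ≤ 7/2 * sr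
    have hth : (1 : ℝ) / 2 ≤ t := my_tanh_ge_half' hr1.le
    have hst1 : st ≤ 1 := by
      rw [hst, Real.sqrt_le_one]
      exact my_tanh_le_one r
    have hsth : 1 / 2 ≤ st := by nlinarith
    have he : 2 * r + 1 ≤ Real.exp r * Real.exp r := by
      have := Real.add_one_le_exp (2 * r)
      rw [show (2 : ℝ) * r = r + r by ring, Real.exp_add] at this
      linarith
    have hce : Real.exp r ≤ 2 * Real.cosh r := by
      rw [Real.cosh_eq]
      have := Real.exp_pos (-r)
      linarith
    have hc2 : 2 * r + 1 ≤ 4 * Real.cosh r ^ 2 := by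
      nlinarith [Real.exp_pos r, Real.cosh_pos r]
    have hT1 : 3 / 2 * sr * st ≤ 3 / 2 * sr := by nlinarith
    have hT2 : r * sr * (1 / Real.cosh r ^ 2 / (2 * st)) ≤ 2 * sr := by
      rw [div_div, mul_one_div, div_le_iff₀ (by positivity)]
      have hst4 : (2 * r + 1) / 2 ≤ 4 * Real.cosh r ^ 2 * st := by
        nlinarith [mul_nonneg (by positivity : (0:ℝ) ≤ 4 * Real.cosh r ^ 2)
          (by linarith : (0:ℝ) ≤ st - 1 / 2)]
      nlinarith [mul_le_mul_of_nonneg_left hst4 hsrp.le]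
    have hle : dL r ≤ 7 / 2 * sr := by rw [hdL]; linarith
    rw [le_div_iff₀ hsqp]
    have hP : (sr * sq) ^ 2 = r * (r + 1) := by rw [mul_pow, hsr2, hsq2]
    have hPp : 0 < sr * sq := mul_pos hsrp hsqp
    have hkey : 7 / 2 * (sr * sq) ≤ 6 * r := by nlinarith
    have : dL r * sq ≤ 7 / 2 * sr * sq :=
      mul_le_mul_of_nonneg_right hle hsqp.le
    nlinarith
lemma mono_aux {a b : ℝ} (h0 : 0 ≤ a) (hab : a ≤ b) :
    a / Real.sqrt (a + 1) ≤ b / Real.sqrt (b + 1) := by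
  have hsa : 0 < Real.sqrt (a + 1) := Real.sqrt_pos.2 (by linarith)
  have hsb : 0 < Real.sqrt (b + 1) := Real.sqrt_pos.2 (by linarith)
  rw [div_le_div_iff₀ hsa hsb]
  have ha2 : Real.sqrt (a + 1) ^ 2 = a + 1 := Real.sq_sqrt (by linarith)
  have hb2 : Real.sqrt (b + 1) ^ 2 = b + 1 := Real.sq_sqrt (by linarith)
  nlinarith [mul_nonneg h0 hsa.le, mul_nonneg h0 hsb.le, mul_pos hsa hsb,
    Real.sqrt_nonneg (a + 1), Real.sqrt_nonneg (b + 1)]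

/-! ### Fréchet derivative lemmas -/

lemma norm_hasFDeriv {x : E2} (hx : x ≠ 0) :
    ∃ N : E2 →L[ℝ] ℝ, HasFDerivAt (fun y : E2 => ‖y‖) N x ∧ ‖N‖ ≤ 1 := by
  have hx0 : (0 : ℝ) < ‖x‖ := norm_pos_iff.2 hx
  have h1 : HasFDerivAt (fun y : E2 => ‖y‖ ^ 2) (2 • (innerSL ℝ x)) x :=
    (hasStrictFDerivAt_norm_sq x).hasFDerivAt
  have h2 : HasDerivAt Real.sqrt (1 / (2 * Real.sqrt (‖x‖ ^ 2))) (‖x‖ ^ 2) :=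
    Real.hasDerivAt_sqrt (by positivity)
  have h3 := h2.comp_hasFDerivAt x h1
  refine ⟨_, h3.congr_of_eventuallyEq ?_, ?_⟩
  · filter_upwards with y
    exact (Real.sqrt_sq (norm_nonneg y)).symm
  · have hNeq : (1 / (2 * Real.sqrt (‖x‖ ^ 2))) • (2 • (innerSL ℝ x)) = ‖x‖⁻¹ • innerSL ℝ x := by
      rw [Real.sqrt_sq (norm_nonneg x)]
      ext y
      simp only [ContinuousLinearMap.smul_apply, smul_eq_mul, two_smul,
        ContinuousLinearMap.add_apply]
      field_simp
      ring
    rw [hNeq]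
    calc ‖(‖x‖⁻¹ : ℝ) • innerSL ℝ x‖ ≤ ‖(‖x‖⁻¹ : ℝ)‖ * ‖innerSL ℝ x‖ := ContinuousLinearMap.opNorm_smul_le _ _
      _ = 1 := by
          rw [innerSL_apply_norm, Real.norm_eq_abs, abs_of_nonneg (by positivity)]
          exact inv_mul_cancel₀ hx0.ne'

lemma LamNorm_hasFDeriv {x : E2} (hx : x ≠ 0) :
    ∃ L : E2 →L[ℝ] ℝ, HasFDerivAt (fun y : E2 => Lam ‖y‖) L x ∧ ‖L‖ ≤ dL ‖x‖ := by
  obtain ⟨N, hN, hNle⟩ := norm_hasFDeriv hx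
  have hx0 : (0 : ℝ) < ‖x‖ := norm_pos_iff.2 hx
  have h := (my_hasDerivAt_Lam hx0).comp_hasFDerivAt x hN
  refine ⟨_, h, ?_⟩
  calc ‖dL ‖x‖ • N‖ ≤ ‖dL ‖x‖‖ * ‖N‖ := ContinuousLinearMap.opNorm_smul_le _ _
    _ ≤ dL ‖x‖ * 1 := by
        rw [Real.norm_eq_abs, abs_of_nonneg (dL_nonneg hx0)]
        exact mul_le_mul_of_nonneg_left hNle (dL_nonneg hx0)
    _ = dL ‖x‖ := mul_one _

theorem stmt10 :
    ∃ C : ℝ, 0 < C ∧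
      ∀ μ ν : ℝ, (μ = 1 ∨ μ = -1) → (ν = 1 ∨ ν = -1) →
        ∀ ξ η : E2, ξ ≠ 0 → η ≠ 0 → ξ ≠ η →
          ‖gradient (fun ζ : E2 => Phi μ ν ξ ζ) η‖ + ‖gradient (fun ζ : E2 => Phi μ ν ζ η) ξ‖ ≤
            C * max ‖ξ‖ ‖η‖ * (‖ξ‖ + ‖η‖ + 1) ^ (-(1 / 2) : ℝ) := by
  refine ⟨48, by norm_num, ?_⟩
  intro μ ν hμ hν ξ η hξ hη hξη
  have hμ1 : ‖μ‖ = 1 := by rcases hμ with h | h <;> simp [h]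
  have hν1 : ‖ν‖ = 1 := by rcases hν with h | h <;> simp [h]
  have hd : ξ - η ≠ 0 := sub_ne_zero.2 hξη
  obtain ⟨L1, hL1, hL1le⟩ := LamNorm_hasFDeriv hd
  obtain ⟨L2, hL2, hL2le⟩ := LamNorm_hasFDeriv hη
  obtain ⟨L3, hL3, hL3le⟩ := LamNorm_hasFDeriv hξ
  have hdLd := dL_nonneg (norm_pos_iff.2 hd)
  have hdLη := dL_nonneg (norm_pos_iff.2 hη)
  have hdLξ := dL_nonneg (norm_pos_iff.2 hξ)
  -- gradient in η
  have hA : HasFDerivAt (fun ζ : E2 => ξ - ζ)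
      ((0 : E2 →L[ℝ] E2) - ContinuousLinearMap.id ℝ E2) η :=
    (hasFDerivAt_const ξ η).sub (hasFDerivAt_id η)
  have hc1 : HasFDerivAt (fun ζ : E2 => Lam ‖ξ - ζ‖)
      (L1.comp ((0 : E2 →L[ℝ] E2) - ContinuousLinearMap.id ℝ E2)) η := hL1.comp η hA
  have hT1 : HasFDerivAt (fun ζ : E2 => Phi μ ν ξ ζ)
      ((0 : E2 →L[ℝ] ℝ) - μ • (L1.comp ((0 : E2 →L[ℝ] E2) - ContinuousLinearMap.id ℝ E2))
        - ν • L2) η :=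
    ((hasFDerivAt_const (Lam ‖ξ‖) η).sub (hc1.const_mul μ)).sub (hL2.const_mul ν)
  -- gradient in ξ
  have hB : HasFDerivAt (fun ζ : E2 => ζ - η)
      (ContinuousLinearMap.id ℝ E2 - (0 : E2 →L[ℝ] E2)) ξ :=
    (hasFDerivAt_id ξ).sub (hasFDerivAt_const η ξ)
  have hc2 : HasFDerivAt (fun ζ : E2 => Lam ‖ζ - η‖)
      (L1.comp (ContinuousLinearMap.id ℝ E2 - (0 : E2 →L[ℝ] E2))) ξ := HasFDerivAt.comp (g := fun y : E2 => Lam ‖y‖) ξ hL1 hB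
  have hT2 : HasFDerivAt (fun ζ : E2 => Phi μ ν ζ η)
      (L3 - μ • (L1.comp (ContinuousLinearMap.id ℝ E2 - (0 : E2 →L[ℝ] E2)))
        - (0 : E2 →L[ℝ] ℝ)) ξ :=
    (hL3.sub (hc2.const_mul μ)).sub (hasFDerivAt_const (ν * Lam ‖η‖) ξ)
  -- norms of gradients equal norms of fderivs
  have hgrad : ∀ (f : E2 → ℝ) (x : E2), ‖gradient f x‖ = ‖fderiv ℝ f x‖ := by
    intro f x
    rw [gradient]
    exact LinearIsometryEquiv.norm_map _ _
  have hAnorm : ‖(0 : E2 →L[ℝ] E2) - ContinuousLinearMap.id ℝ E2‖ ≤ 1 := by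
    rw [zero_sub, norm_neg]
    exact ContinuousLinearMap.norm_id_le
  have hBnorm : ‖ContinuousLinearMap.id ℝ E2 - (0 : E2 →L[ℝ] E2)‖ ≤ 1 := by
    rw [sub_zero]
    exact ContinuousLinearMap.norm_id_le
  have hcompA : ‖L1.comp ((0 : E2 →L[ℝ] E2) - ContinuousLinearMap.id ℝ E2)‖ ≤ dL ‖ξ - η‖ :=
    calc ‖L1.comp _‖ ≤ ‖L1‖ * ‖(0 : E2 →L[ℝ] E2) - ContinuousLinearMap.id ℝ E2‖ :=
          ContinuousLinearMap.opNorm_comp_le _ _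
      _ ≤ ‖L1‖ * 1 := mul_le_mul_of_nonneg_left hAnorm (norm_nonneg _)
      _ = ‖L1‖ := mul_one _
      _ ≤ dL ‖ξ - η‖ := hL1le
  have hcompB : ‖L1.comp (ContinuousLinearMap.id ℝ E2 - (0 : E2 →L[ℝ] E2))‖ ≤ dL ‖ξ - η‖ :=
    calc ‖L1.comp _‖ ≤ ‖L1‖ * ‖ContinuousLinearMap.id ℝ E2 - (0 : E2 →L[ℝ] E2)‖ :=
          ContinuousLinearMap.opNorm_comp_le _ _
      _ ≤ ‖L1‖ * 1 := mul_le_mul_of_nonneg_left hBnorm (norm_nonneg _)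
      _ = ‖L1‖ := mul_one _
      _ ≤ dL ‖ξ - η‖ := hL1le
  have hsm1 : ‖μ • (L1.comp ((0 : E2 →L[ℝ] E2) - ContinuousLinearMap.id ℝ E2))‖
      ≤ dL ‖ξ - η‖ := by
    calc ‖μ • _‖ ≤ ‖μ‖ * ‖L1.comp ((0 : E2 →L[ℝ] E2) - ContinuousLinearMap.id ℝ E2)‖ :=
          norm_smul_le _ _
      _ ≤ 1 * dL ‖ξ - η‖ := by
          rw [hμ1]
          exact mul_le_mul_of_nonneg_left hcompA zero_le_one
      _ = dL ‖ξ - η‖ := one_mul _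
  have hsm2 : ‖ν • L2‖ ≤ dL ‖η‖ := by
    calc ‖ν • L2‖ ≤ ‖ν‖ * ‖L2‖ := ContinuousLinearMap.opNorm_smul_le _ _
      _ ≤ 1 * dL ‖η‖ := by
          rw [hν1]
          exact mul_le_mul_of_nonneg_left hL2le zero_le_one
      _ = dL ‖η‖ := one_mul _
  have hsm3 : ‖μ • (L1.comp (ContinuousLinearMap.id ℝ E2 - (0 : E2 →L[ℝ] E2)))‖
      ≤ dL ‖ξ - η‖ := by
    calc ‖μ • _‖ ≤ ‖μ‖ * ‖L1.comp (ContinuousLinearMap.id ℝ E2 - (0 : E2 →L[ℝ] E2))‖ :=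
          norm_smul_le _ _
      _ ≤ 1 * dL ‖ξ - η‖ := by
          rw [hμ1]
          exact mul_le_mul_of_nonneg_left hcompB zero_le_one
      _ = dL ‖ξ - η‖ := one_mul _
  have hg1 : ‖gradient (fun ζ : E2 => Phi μ ν ξ ζ) η‖ ≤ dL ‖ξ - η‖ + dL ‖η‖ := by
    rw [hgrad, hT1.fderiv]
    calc ‖(0 : E2 →L[ℝ] ℝ) - μ • (L1.comp _) - ν • L2‖
        ≤ ‖(0 : E2 →L[ℝ] ℝ) - μ • (L1.comp ((0 : E2 →L[ℝ] E2) - ContinuousLinearMap.id ℝ E2))‖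
          + ‖ν • L2‖ := norm_sub_le _ _
      _ = ‖μ • (L1.comp ((0 : E2 →L[ℝ] E2) - ContinuousLinearMap.id ℝ E2))‖ + ‖ν • L2‖ := by
          rw [zero_sub, norm_neg]
      _ ≤ dL ‖ξ - η‖ + dL ‖η‖ := add_le_add hsm1 hsm2
  have hg2 : ‖gradient (fun ζ : E2 => Phi μ ν ζ η) ξ‖ ≤ dL ‖ξ‖ + dL ‖ξ - η‖ := by
    rw [hgrad, hT2.fderiv]
    calc ‖L3 - μ • (L1.comp _) - (0 : E2 →L[ℝ] ℝ)‖
        = ‖L3 - μ • (L1.comp (ContinuousLinearMap.id ℝ E2 - (0 : E2 →L[ℝ] E2)))‖ := by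
          rw [sub_zero]
      _ ≤ ‖L3‖ + ‖μ • (L1.comp (ContinuousLinearMap.id ℝ E2 - (0 : E2 →L[ℝ] E2)))‖ :=
          norm_sub_le _ _
      _ ≤ dL ‖ξ‖ + dL ‖ξ - η‖ := add_le_add hL3le hsm3
  -- numeric assembly
  set M := max ‖ξ‖ ‖η‖ with hM
  have hMp : 0 < M := lt_max_iff.2 (Or.inl (norm_pos_iff.2 hξ))
  have h1 := le_max_left ‖ξ‖ ‖η‖
  have h2 := le_max_right ‖ξ‖ ‖η‖
  have hξM : ‖ξ‖ ≤ 2 * M := by linarith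
  have hηM : ‖η‖ ≤ 2 * M := by linarith
  have hdM : ‖ξ - η‖ ≤ 2 * M := by
    have := norm_sub_le ξ η
    linarith
  have hbound : ∀ r : ℝ, 0 < r → r ≤ 2 * M → dL r ≤ 6 * (2 * M) / Real.sqrt (2 * M + 1) := by
    intro r hrp hrM
    calc dL r ≤ 6 * r / Real.sqrt (r + 1) := dL_le hrp
      _ ≤ 6 * (2 * M) / Real.sqrt (2 * M + 1) := by
          have := mono_aux hrp.le hrM
          calc 6 * r / Real.sqrt (r + 1) = 6 * (r / Real.sqrt (r + 1)) := by ring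
            _ ≤ 6 * ((2 * M) / Real.sqrt (2 * M + 1)) := by linarith
            _ = 6 * (2 * M) / Real.sqrt (2 * M + 1) := by ring
  have b1 := hbound _ (norm_pos_iff.2 hd) hdM
  have b2 := hbound _ (norm_pos_iff.2 hη) hηM
  have b3 := hbound _ (norm_pos_iff.2 hξ) hξM
  have hS : ‖ξ‖ + ‖η‖ ≤ 2 * M := by linarith
  have hsqle : Real.sqrt (‖ξ‖ + ‖η‖ + 1) ≤ Real.sqrt (2 * M + 1) :=
    Real.sqrt_le_sqrt (by linarith)
  have hsqpos : 0 < Real.sqrt (‖ξ‖ + ‖η‖ + 1) := Real.sqrt_pos.2 (by positivity)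
  have hsqpos2 : 0 < Real.sqrt (2 * M + 1) := Real.sqrt_pos.2 (by positivity)
  have hrpow : (‖ξ‖ + ‖η‖ + 1 : ℝ) ^ (-(1 / 2) : ℝ) = (Real.sqrt (‖ξ‖ + ‖η‖ + 1))⁻¹ := by
    rw [Real.rpow_neg (by positivity), ← Real.sqrt_eq_rpow]
  rw [hrpow]
  have key : 6 * (2 * M) / Real.sqrt (2 * M + 1) ≤ 12 * M * (Real.sqrt (‖ξ‖ + ‖η‖ + 1))⁻¹ := by
    rw [div_le_iff₀ hsqpos2]
    calc 6 * (2 * M) = Real.sqrt (‖ξ‖ + ‖η‖ + 1) * (12 * M * (Real.sqrt (‖ξ‖ + ‖η‖ + 1))⁻¹) := by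
          field_simp
          ring
      _ ≤ Real.sqrt (2 * M + 1) * (12 * M * (Real.sqrt (‖ξ‖ + ‖η‖ + 1))⁻¹) := by
          apply mul_le_mul_of_nonneg_right hsqle
          positivity
      _ = 12 * M * (Real.sqrt (‖ξ‖ + ‖η‖ + 1))⁻¹ * Real.sqrt (2 * M + 1) := by ring
  calc ‖gradient (fun ζ : E2 => Phi μ ν ξ ζ) η‖ + ‖gradient (fun ζ : E2 => Phi μ ν ζ η) ξ‖
      ≤ (dL ‖ξ - η‖ + dL ‖η‖) + (dL ‖ξ‖ + dL ‖ξ - η‖) := add_le_add hg1 hg2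
    _ ≤ 4 * (6 * (2 * M) / Real.sqrt (2 * M + 1)) := by linarith
    _ ≤ 4 * (12 * M * (Real.sqrt (‖ξ‖ + ‖η‖ + 1))⁻¹) := by linarith
    _ = 48 * M * (Real.sqrt (‖ξ‖ + ‖η‖ + 1))⁻¹ := by ring

end
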